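/- (Gauge invariance of QAOA amplitudes.) For every operator H on the n-qubit state space, every depth p ≥ 1, all parameter vectors γ, β ∈ ℝ^p, and all bitstrings x, y ∈ {0,1}^n, the QAOA output amplitudes of the gauge-transformed Hamiltonian H^y = P_y H P_y satisfy ⟨x| U(H^y; γ, β) |s⟩ = ⟨x ⊕ y| U(H; γ, β) |s⟩, where |s⟩ = |+⟩^{⊗n} is the uniform superposition initial state. Consequently, the probability of measuring the transformed bitstring x ⊕ y when running QAOA for H^y equals the probability of measuring x when running QAOA for H: |⟨x ⊕ y| U(H^y; γ, β) |s⟩|² = |⟨x| U(H; γ, β) |s⟩|². -/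

import Mathlib

open Matrix

/-- The computational basis state `|x⟩` on `n` qubits. -/
def ket {n : ℕ} (x : Fin n → Bool) : (Fin n → Bool) → ℂ :=
  fun z => if z = x then 1 else 0

/-- The Pauli `X` operator on qubit `j`, sending `|x⟩` to `|x ⊕ e_j⟩`. -/
def PauliX {n : ℕ} (j : Fin n) : Matrix (Fin n → Bool) (Fin n → Bool) ℂ :=
  fun a b => if a = (fun i => xor (b i) (if i = j then true else false)) then 1 else 0

/-- The bitflip operator `P_y`, the linear map sending `|x⟩` to `|x ⊕ y⟩`. -/
def bitflip {n : ℕ} (y : Fin n → Bool) : Matrix (Fin n → Bool) (Fin n → Bool) ℂ :=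
  fun a b => if a = (fun i => xor (b i) (y i)) then 1 else 0

/-- The uniform superposition state `|s⟩ = |+⟩^{⊗n} = 2^{-n/2} Σ_{x ∈ {0,1}^n} |x⟩`. -/
noncomputable def uniformState (n : ℕ) : (Fin n → Bool) → ℂ :=
  ((Real.sqrt 2 : ℂ) ^ n)⁻¹ • ∑ x : Fin n → Bool, ket x

/-- The QAOA phase separator `U_P(H; γ) = exp(-iγH)`. -/
noncomputable def phaseSep {n : ℕ} (H : Matrix (Fin n → Bool) (Fin n → Bool) ℂ) (γ : ℝ) :
    Matrix (Fin n → Bool) (Fin n → Bool) ℂ :=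
  NormedSpace.exp ((-(Complex.I * (γ : ℂ))) • H)

/-- The QAOA mixer `U_M(β) = exp(-iβ Σ_j X_j)`. -/
noncomputable def mixer (n : ℕ) (β : ℝ) : Matrix (Fin n → Bool) (Fin n → Bool) ℂ :=
  NormedSpace.exp ((-(Complex.I * (β : ℂ))) • ∑ j : Fin n, PauliX j)

/-- The depth-`p` QAOA circuit `U(H; γ, β) = ∏_{l=p}^{1} U_M(β_l) U_P(H; γ_l)`,
with the `l = 1` layer acting first (i.e. appearing rightmost in the product). -/
noncomputable def qaoaCircuit {n : ℕ} (H : Matrix (Fin n → Bool) (Fin n → Bool) ℂ)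
    (p : ℕ) (γ β : Fin p → ℝ) : Matrix (Fin n → Bool) (Fin n → Bool) ℂ :=
  ((List.ofFn (fun l : Fin p => mixer n (β l) * phaseSep H (γ l))).reverse).prod

-- Auxiliary lemmas

lemma xor_xor_self {n : ℕ} (y a : Fin n → Bool) :
    (fun i => xor (xor (a i) (y i)) (y i)) = a := by
  funext i; simp [Bool.xor_assoc]

lemma bitflip_mul_apply {n : ℕ} (y : Fin n → Bool)
    (A : Matrix (Fin n → Bool) (Fin n → Bool) ℂ) (a b : Fin n → Bool) :
    (bitflip y * A) a b = A (fun i => xor (a i) (y i)) b := by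
  rw [Matrix.mul_apply]
  rw [Finset.sum_eq_single (fun i => xor (a i) (y i))]
  · simp [bitflip, xor_xor_self]
  · intro c _ hc
    simp only [bitflip, ite_mul, one_mul, zero_mul, ite_eq_right_iff]
    intro h
    exact absurd (by rw [h]; exact (xor_xor_self y c).symm) hc
  · simp

lemma mul_bitflip_apply {n : ℕ} (y : Fin n → Bool)
    (A : Matrix (Fin n → Bool) (Fin n → Bool) ℂ) (a b : Fin n → Bool) :
    (A * bitflip y) a b = A a (fun i => xor (b i) (y i)) := by
  rw [Matrix.mul_apply]
  simp only [bitflip, mul_ite, mul_one, mul_zero]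
  rw [Finset.sum_ite_eq' Finset.univ]
  simp

lemma bitflip_mulVec {n : ℕ} (y : Fin n → Bool) (v : (Fin n → Bool) → ℂ) (a : Fin n → Bool) :
    (bitflip y *ᵥ v) a = v (fun i => xor (a i) (y i)) := by
  rw [Matrix.mulVec, dotProduct]
  rw [Finset.sum_eq_single (fun i => xor (a i) (y i))]
  · simp [bitflip, xor_xor_self]
  · intro c _ hc
    simp only [bitflip, ite_mul, one_mul, zero_mul, ite_eq_right_iff]
    intro h
    exact absurd (by rw [h]; exact (xor_xor_self y c).symm) hc
  · simp

lemma bitflip_sq {n : ℕ} (y : Fin n → Bool) : bitflip y * bitflip y = 1 := by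
  ext a b
  rw [bitflip_mul_apply]
  simp only [bitflip, Matrix.one_apply]
  refine if_congr ?_ rfl rfl
  constructor
  · intro h
    have := congrArg (fun f => fun i => xor (f i) (y i)) h
    simpa [xor_xor_self] using this
  · rintro rfl; rfl

lemma bitflip_comm_pauli {n : ℕ} (y : Fin n → Bool) (j : Fin n) :
    bitflip y * PauliX j = PauliX j * bitflip y := by
  ext a b
  rw [bitflip_mul_apply, mul_bitflip_apply]
  simp only [PauliX]
  refine if_congr ?_ rfl rfl
  rw [funext_iff, funext_iff]
  refine forall_congr' fun i => ?_
  cases ha : a i <;> cases hb : b i <;> cases hy : y i <;> by_cases hij : i = j <;> simp [hij]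

noncomputable def bitflipUnit {n : ℕ} (y : Fin n → Bool) :
    (Matrix (Fin n → Bool) (Fin n → Bool) ℂ)ˣ :=
  ⟨bitflip y, bitflip y, bitflip_sq y, bitflip_sq y⟩

lemma bitflip_conj_exp {n : ℕ} (y : Fin n → Bool)
    (A : Matrix (Fin n → Bool) (Fin n → Bool) ℂ) :
    bitflip y * NormedSpace.exp A * bitflip y
      = NormedSpace.exp (bitflip y * A * bitflip y) := by
  have h := Matrix.exp_units_conj (bitflipUnit y) A
  have h1 : ((bitflipUnit y : (Matrix (Fin n → Bool) (Fin n → Bool) ℂ)ˣ) :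
      Matrix (Fin n → Bool) (Fin n → Bool) ℂ) = bitflip y := rfl
  have h2 : (((bitflipUnit y)⁻¹ : (Matrix (Fin n → Bool) (Fin n → Bool) ℂ)ˣ) :
      Matrix (Fin n → Bool) (Fin n → Bool) ℂ) = bitflip y := rfl
  rw [h1, h2] at h
  exact h.symm

lemma conj_mul_conj {n : ℕ} (y : Fin n → Bool)
    (A B : Matrix (Fin n → Bool) (Fin n → Bool) ℂ) :
    (bitflip y * A * bitflip y) * (bitflip y * B * bitflip y)
      = bitflip y * (A * B) * bitflip y := by
  simp only [Matrix.mul_assoc]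
  rw [← Matrix.mul_assoc (bitflip y) (bitflip y), bitflip_sq, Matrix.one_mul]

lemma bitflip_conj_mixer {n : ℕ} (y : Fin n → Bool) (β : ℝ) :
    bitflip y * mixer n β * bitflip y = mixer n β := by
  rw [mixer, bitflip_conj_exp]
  congr 1
  rw [Matrix.mul_smul, Matrix.smul_mul]
  congr 1
  rw [Finset.mul_sum, Finset.sum_mul]
  refine Finset.sum_congr rfl fun j _ => ?_
  rw [bitflip_comm_pauli, Matrix.mul_assoc, bitflip_sq, Matrix.mul_one]

lemma bitflip_conj_phaseSep {n : ℕ} (y : Fin n → Bool)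
    (H : Matrix (Fin n → Bool) (Fin n → Bool) ℂ) (γ : ℝ) :
    phaseSep (bitflip y * H * bitflip y) γ = bitflip y * phaseSep H γ * bitflip y := by
  rw [phaseSep, phaseSep, bitflip_conj_exp]
  congr 1
  rw [Matrix.mul_smul, Matrix.smul_mul]

lemma conj_list_prod {n : ℕ} (y : Fin n → Bool)
    (L : List (Matrix (Fin n → Bool) (Fin n → Bool) ℂ)) :
    (L.map (fun M => bitflip y * M * bitflip y)).prod = bitflip y * L.prod * bitflip y := by
  induction L with
  | nil => simp [bitflip_sq]
  | cons M L ih =>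
      simp only [List.map_cons, List.prod_cons, ih]
      exact conj_mul_conj y M L.prod

lemma qaoa_conj {n : ℕ} (y : Fin n → Bool) (H : Matrix (Fin n → Bool) (Fin n → Bool) ℂ)
    (p : ℕ) (γ β : Fin p → ℝ) :
    qaoaCircuit (bitflip y * H * bitflip y) p γ β
      = bitflip y * qaoaCircuit H p γ β * bitflip y := by
  have hmap : List.ofFn
        (fun l : Fin p => mixer n (β l) * phaseSep (bitflip y * H * bitflip y) (γ l))
      = (List.ofFn (fun l : Fin p => mixer n (β l) * phaseSep H (γ l))).map
          (fun M => bitflip y * M * bitflip y) := by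
    rw [List.map_ofFn]
    refine congrArg _ (funext fun l => ?_)
    show mixer n (β l) * phaseSep (bitflip y * H * bitflip y) (γ l)
        = bitflip y * (mixer n (β l) * phaseSep H (γ l)) * bitflip y
    rw [bitflip_conj_phaseSep, ← conj_mul_conj y, bitflip_conj_mixer]
  rw [qaoaCircuit, hmap, ← List.map_reverse, conj_list_prod]
  rfl

lemma uniformState_apply {n : ℕ} (z : Fin n → Bool) :
    uniformState n z = ((Real.sqrt 2 : ℂ) ^ n)⁻¹ := by
  simp [uniformState, ket, Finset.sum_apply, Finset.sum_ite_eq' Finset.univ]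

lemma bitflip_uniform {n : ℕ} (y : Fin n → Bool) :
    bitflip y *ᵥ uniformState n = uniformState n := by
  funext a
  rw [bitflip_mulVec, uniformState_apply, uniformState_apply]

lemma ket_dot {n : ℕ} (x : Fin n → Bool) (v : (Fin n → Bool) → ℂ) :
    star (ket x) ⬝ᵥ v = v x := by
  rw [dotProduct]
  rw [Finset.sum_eq_single x]
  · simp [ket]
  · intro c _ hc; simp [ket, hc]
  · simp

lemma qaoa_key {n : ℕ} (H : Matrix (Fin n → Bool) (Fin n → Bool) ℂ)
    (p : ℕ) (γ β : Fin p → ℝ) (y : Fin n → Bool) (x : Fin n → Bool) :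
    star (ket x) ⬝ᵥ (qaoaCircuit (bitflip y * H * bitflip y) p γ β *ᵥ uniformState n) =
      star (ket (fun i => xor (x i) (y i))) ⬝ᵥ (qaoaCircuit H p γ β *ᵥ uniformState n) := by
  rw [qaoa_conj, ← Matrix.mulVec_mulVec, ← Matrix.mulVec_mulVec, bitflip_uniform,
    ket_dot, bitflip_mulVec, ket_dot]

/-- Gauge invariance of QAOA amplitudes: `⟨x| U(H^y; γ, β) |s⟩ = ⟨x ⊕ y| U(H; γ, β) |s⟩`,
and consequently the output probabilities satisfy
`|⟨x ⊕ y| U(H^y; γ, β) |s⟩|² = |⟨x| U(H; γ, β) |s⟩|²`. -/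
theorem qaoa_amplitudes_gauge {n : ℕ} (H : Matrix (Fin n → Bool) (Fin n → Bool) ℂ)
    (p : ℕ) (hp : 1 ≤ p) (γ β : Fin p → ℝ) (x y : Fin n → Bool) :
    (star (ket x) ⬝ᵥ
        (qaoaCircuit (bitflip y * H * bitflip y) p γ β *ᵥ uniformState n) =
      star (ket (fun i => xor (x i) (y i))) ⬝ᵥ (qaoaCircuit H p γ β *ᵥ uniformState n)) ∧
    (‖star (ket (fun i => xor (x i) (y i))) ⬝ᵥ
        (qaoaCircuit (bitflip y * H * bitflip y) p γ β *ᵥ uniformState n)‖ ^ 2 =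
      ‖star (ket x) ⬝ᵥ (qaoaCircuit H p γ β *ᵥ uniformState n)‖ ^ 2) := by
  refine ⟨qaoa_key H p γ β y x, ?_⟩
  rw [qaoa_key H p γ β y (fun i => xor (x i) (y i))]
  rw [xor_xor_self y x]
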